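/- The function φ₀(x) = e^{−x₁/2} K₀(|x|/2), defined on ℝ² \ {0}, satisfies Δφ₀ + ∂₁φ₀ = 0 at every point of ℝ² \ {0}. -/

import Mathlib

noncomputable section

open Real MeasureTheory

/-- The Euclidean plane ℝ². -/
abbrev R2 : Type := EuclideanSpace ℝ (Fin 2)

/-- The i-th standard basis vector of ℝ². -/
noncomputable def e2 (i : Fin 2) : R2 := EuclideanSpace.single i 1

/-- Partial derivative ∂ᵢu(x). -/
noncomputable def pd (i : Fin 2) (u : R2 → ℝ) (x : R2) : ℝ := fderiv ℝ u x (e2 i)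

/-- Second partial derivative ∂ᵢ∂ⱼu(x). -/
noncomputable def pd2 (i j : Fin 2) (u : R2 → ℝ) (x : R2) : ℝ := pd i (fun y => pd j u y) x

/-- Squared norm of the gradient, |Du(x)|². -/
noncomputable def gradSq (u : R2 → ℝ) (x : R2) : ℝ := ∑ i, (pd i u x) ^ 2

/-- The translator equation with direction V = (v₁,v₂,v₃):
div(Du/√(1+|Du|²)) = (v₃ − v₁∂₁u − v₂∂₂u)/√(1+|Du|²) on Ω. -/
def TranslatorEqnOn (V : Fin 3 → ℝ) (u : R2 → ℝ) (Ω : Set R2) : Prop :=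
  ∀ x ∈ Ω, (∑ i, pd i (fun y => pd i u y / Real.sqrt (1 + gradSq u y)) x)
    = (V 2 - V 0 * pd 0 u x - V 1 * pd 1 u x) / Real.sqrt (1 + gradSq u x)

/-- The second-order coefficients a_{jk} = (1+|Du|²)δ_{jk} − ∂ⱼu ∂ₖu of the
linearization of the translator equation. -/
noncomputable def acoef (u : R2 → ℝ) (j k : Fin 2) (x : R2) : ℝ :=
  (1 + gradSq u x) * (if j = k then 1 else 0) - pd j u x * pd k u x

/-- The first-order coefficients b_j of the linearization of the translator equation
with direction (1,0,0). -/
noncomputable def bcoef (u : R2 → ℝ) (j : Fin 2) (x : R2) : ℝ :=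
  (1 + gradSq u x) * (if j = 0 then 1 else 0)
    - 2 * (∑ k, pd k u x * pd2 j k u x)
    - (pd 0 u x + (∑ k, pd2 k k u x)
        - 3 * (∑ k, ∑ l, pd k u x * pd l u x * pd2 k l u x) / (1 + gradSq u x)) * pd j u x

/-- The quasilinear translator operator
Qφ = (1+|Dφ|²)(Δφ+∂₁φ) − Σ_{i,j} ∂ᵢφ ∂ⱼφ ∂ᵢⱼφ. -/
noncomputable def Qop (φ : R2 → ℝ) (x : R2) : ℝ :=
  (1 + gradSq φ x) * ((∑ k, pd2 k k φ x) + pd 0 φ x)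
    - ∑ i, ∑ j, pd i φ x * pd j φ x * pd2 i j φ x

/-- Modified Bessel function of the second kind of order 0:
K₀(x) = ∫₀^∞ e^{−x cosh t} dt. -/
noncomputable def K0 (x : ℝ) : ℝ := ∫ t in Set.Ioi (0 : ℝ), Real.exp (-(x * Real.cosh t))

/-- The point (a, b) ∈ ℝ². -/
noncomputable def pt (a b : ℝ) : R2 := (EuclideanSpace.equiv (Fin 2) ℝ).symm ![a, b]

section PartA
open Set Topology Filter

noncomputable def K1 (x : ℝ) : ℝ := -∫ t in Set.Ioi (0 : ℝ), Real.cosh t * Real.exp (-(x * Real.cosh t))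
noncomputable def K2 (x : ℝ) : ℝ := ∫ t in Set.Ioi (0 : ℝ), Real.cosh t ^ 2 * Real.exp (-(x * Real.cosh t))

lemma pow_mul_exp_neg_le {c u : ℝ} (hc : 0 < c) (hu : 0 ≤ u) (n : ℕ) :
    u ^ n * Real.exp (-(c * u)) ≤ n.factorial / c ^ n := by
  have h1 : (c * u) ^ n / n.factorial ≤ Real.exp (c * u) := by
    refine le_trans ?_ (Real.sum_le_exp_of_nonneg (mul_nonneg hc.le hu) (n + 1))
    exact Finset.single_le_sum (f := fun i => (c * u) ^ i / i.factorial)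
      (fun i _ => by positivity) (Finset.self_mem_range_succ n)
  have hfac : (0:ℝ) < n.factorial := by exact_mod_cast n.factorial_pos
  have hcn : (0:ℝ) < c ^ n := pow_pos hc n
  rw [div_le_iff₀ hfac] at h1
  have h2 := mul_le_mul_of_nonneg_right h1 (Real.exp_pos (-(c * u))).le
  have h3 : Real.exp (c * u) * (n.factorial:ℝ) * Real.exp (-(c * u)) = n.factorial := by
    rw [mul_comm (Real.exp (c * u)) ((n.factorial:ℝ)), mul_assoc, ← Real.exp_add]; simp
  rw [h3, mul_pow] at h2
  rw [le_div_iff₀ hcn]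
  calc u ^ n * Real.exp (-(c * u)) * c ^ n
      = c ^ n * u ^ n * Real.exp (-(c * u)) := by ring
    _ ≤ n.factorial := h2

lemma cosh_lower (t : ℝ) : (1 + t) / 2 ≤ Real.cosh t := by
  have h := Real.add_one_le_exp t
  have h2 : Real.exp t / 2 ≤ Real.cosh t := by
    rw [Real.cosh_eq]
    have := (Real.exp_pos (-t)).le
    linarith
  linarith

lemma integrable_cosh_pow (n : ℕ) {x : ℝ} (hx : 0 < x) :
    IntegrableOn (fun t => Real.cosh t ^ n * Real.exp (-(x * Real.cosh t))) (Set.Ioi (0:ℝ)) := by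
  have hc : Continuous fun t => Real.cosh t ^ n * Real.exp (-(x * Real.cosh t)) := by
    fun_prop
  refine Integrable.mono' (((exp_neg_integrableOn_Ioi 0 (show (0:ℝ) < x/4 by linarith)).const_mul
    ((n.factorial / (x/2) ^ n) * Real.exp (-(x/4))))) hc.aestronglyMeasurable ?_
  filter_upwards [ae_restrict_mem measurableSet_Ioi] with t ht
  have hch : (0:ℝ) ≤ Real.cosh t := (Real.cosh_pos t).le
  rw [Real.norm_eq_abs, abs_of_nonneg (by positivity)]
  have hsplit : Real.exp (-(x * Real.cosh t))
      = Real.exp (-(x/2 * Real.cosh t)) * Real.exp (-(x/2 * Real.cosh t)) := by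
    rw [← Real.exp_add]; ring_nf
  have h1 : Real.cosh t ^ n * Real.exp (-(x/2 * Real.cosh t)) ≤ n.factorial / (x/2) ^ n :=
    pow_mul_exp_neg_le (by linarith) hch n
  have h2 : Real.exp (-(x/2 * Real.cosh t)) ≤ Real.exp (-(x/4)) * Real.exp (-(x/4) * t) := by
    rw [← Real.exp_add, Real.exp_le_exp]
    have := cosh_lower t
    nlinarith [le_of_lt (mem_Ioi.mp ht)]
  calc Real.cosh t ^ n * Real.exp (-(x * Real.cosh t))
      = (Real.cosh t ^ n * Real.exp (-(x/2 * Real.cosh t))) * Real.exp (-(x/2 * Real.cosh t)) := by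
        rw [hsplit]; ring
    _ ≤ (n.factorial / (x/2) ^ n) * (Real.exp (-(x/4)) * Real.exp (-(x/4) * t)) := by
        apply mul_le_mul h1 h2 (Real.exp_pos _).le (by positivity)
    _ = (n.factorial / (x/2) ^ n) * Real.exp (-(x/4)) * Real.exp (-(x/4) * t) := by
        rw [mul_assoc]

lemma K0_hasDeriv {x : ℝ} (hx : 0 < x) : HasDerivAt K0 (K1 x) x := by
  have key := hasDerivAt_integral_of_dominated_loc_of_deriv_le
    (F := fun z t => Real.exp (-(z * Real.cosh t)))
    (F' := fun z t => -(Real.cosh t * Real.exp (-(z * Real.cosh t))))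
    (x₀ := x) (s := Metric.ball x (x/2))
    (μ := volume.restrict (Set.Ioi (0:ℝ)))
    (bound := fun t => Real.cosh t * Real.exp (-(x/2 * Real.cosh t)))
    (Metric.ball_mem_nhds x (by linarith))
    (Filter.Eventually.of_forall fun z =>
      (Continuous.aestronglyMeasurable (by fun_prop)))
    (by simpa [IntegrableOn] using integrable_cosh_pow 0 hx)
    (Continuous.aestronglyMeasurable (by fun_prop))
    ?_ (by simpa [IntegrableOn] using integrable_cosh_pow 1 (show (0:ℝ) < x/2 by linarith)) ?_
  · have := key.2
    unfold K0 K1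
    rw [← integral_neg]
    exact this
  · filter_upwards [ae_restrict_mem measurableSet_Ioi] with t ht z hz
    have hch : (0:ℝ) < Real.cosh t := Real.cosh_pos t
    rw [Real.norm_eq_abs, abs_of_nonpos (neg_nonpos.mpr (by positivity)), neg_neg]
    have hz2 : x/2 ≤ z := by
      rw [Metric.mem_ball, Real.dist_eq, abs_lt] at hz; linarith
    have : Real.exp (-(z * Real.cosh t)) ≤ Real.exp (-(x/2 * Real.cosh t)) := by
      rw [Real.exp_le_exp]; nlinarith
    nlinarith
  · filter_upwards [ae_restrict_mem measurableSet_Ioi] with t ht z hz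
    have h := (((hasDerivAt_id z).mul_const (Real.cosh t)).neg).exp
    refine h.congr_deriv ?_
    simp [id]
    ring

lemma K1_hasDeriv {x : ℝ} (hx : 0 < x) : HasDerivAt K1 (K2 x) x := by
  have key := hasDerivAt_integral_of_dominated_loc_of_deriv_le
    (F := fun z t => Real.cosh t * Real.exp (-(z * Real.cosh t)))
    (F' := fun z t => -(Real.cosh t ^ 2 * Real.exp (-(z * Real.cosh t))))
    (x₀ := x) (s := Metric.ball x (x/2))
    (μ := volume.restrict (Set.Ioi (0:ℝ)))
    (bound := fun t => Real.cosh t ^ 2 * Real.exp (-(x/2 * Real.cosh t)))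
    (Metric.ball_mem_nhds x (by linarith))
    (Filter.Eventually.of_forall fun z =>
      (Continuous.aestronglyMeasurable (by fun_prop)))
    (by simpa [IntegrableOn] using integrable_cosh_pow 1 hx)
    (Continuous.aestronglyMeasurable (by fun_prop))
    ?_ (integrable_cosh_pow 2 (show (0:ℝ) < x/2 by linarith)) ?_
  · have h2 := key.2.neg
    unfold K1 K2
    refine h2.congr_deriv ?_
    rw [← integral_neg]
    congr 1; funext t; ring
  · filter_upwards [ae_restrict_mem measurableSet_Ioi] with t ht z hz
    have hch : (0:ℝ) < Real.cosh t := Real.cosh_pos t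
    rw [Real.norm_eq_abs, abs_of_nonpos (neg_nonpos.mpr (by positivity)), neg_neg]
    have hz2 : x/2 ≤ z := by
      rw [Metric.mem_ball, Real.dist_eq, abs_lt] at hz; linarith
    have : Real.exp (-(z * Real.cosh t)) ≤ Real.exp (-(x/2 * Real.cosh t)) := by
      rw [Real.exp_le_exp]; nlinarith
    nlinarith
  · filter_upwards [ae_restrict_mem measurableSet_Ioi] with t ht z hz
    have h := (((hasDerivAt_id z).mul_const (Real.cosh t)).neg).exp.const_mul (Real.cosh t)
    refine h.congr_deriv ?_
    simp [id]
    ring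

lemma cosh_exp_bound {x : ℝ} (hx : 0 < x) (n : ℕ) {t : ℝ} (ht : 0 ≤ t) :
    Real.cosh t ^ n * Real.exp (-(x * Real.cosh t))
      ≤ (n.factorial / (x/2) ^ n) * Real.exp (-(x/4)) * Real.exp (-(x/4) * t) := by
  have hch : (0:ℝ) ≤ Real.cosh t := (Real.cosh_pos t).le
  have hsplit : Real.exp (-(x * Real.cosh t))
      = Real.exp (-(x/2 * Real.cosh t)) * Real.exp (-(x/2 * Real.cosh t)) := by
    rw [← Real.exp_add]; ring_nf
  have h1 : Real.cosh t ^ n * Real.exp (-(x/2 * Real.cosh t)) ≤ n.factorial / (x/2) ^ n :=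
    pow_mul_exp_neg_le (by linarith) hch n
  have h2 : Real.exp (-(x/2 * Real.cosh t)) ≤ Real.exp (-(x/4)) * Real.exp (-(x/4) * t) := by
    rw [← Real.exp_add, Real.exp_le_exp]
    have := cosh_lower t
    nlinarith
  calc Real.cosh t ^ n * Real.exp (-(x * Real.cosh t))
      = (Real.cosh t ^ n * Real.exp (-(x/2 * Real.cosh t))) * Real.exp (-(x/2 * Real.cosh t)) := by
        rw [hsplit]; ring
    _ ≤ (n.factorial / (x/2) ^ n) * (Real.exp (-(x/4)) * Real.exp (-(x/4) * t)) := by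
        apply mul_le_mul h1 h2 (Real.exp_pos _).le (by positivity)
    _ = (n.factorial / (x/2) ^ n) * Real.exp (-(x/4)) * Real.exp (-(x/4) * t) := by
        rw [mul_assoc]

lemma integrable_sinh_sq {x : ℝ} (hx : 0 < x) :
    IntegrableOn (fun t => Real.sinh t ^ 2 * Real.exp (-(x * Real.cosh t))) (Set.Ioi (0:ℝ)) := by
  refine Integrable.mono' (integrable_cosh_pow 2 hx) (Continuous.aestronglyMeasurable (by fun_prop)) ?_
  filter_upwards [ae_restrict_mem measurableSet_Ioi] with t ht
  rw [Real.norm_eq_abs, abs_of_nonneg (by positivity)]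
  have h : Real.sinh t ^ 2 ≤ Real.cosh t ^ 2 := by
    have := Real.cosh_sq t; nlinarith
  nlinarith [Real.exp_pos (-(x * Real.cosh t))]

lemma parts_identity {x : ℝ} (hx : 0 < x) :
    (∫ t in Set.Ioi (0:ℝ), Real.cosh t * Real.exp (-(x * Real.cosh t)))
      = x * ∫ t in Set.Ioi (0:ℝ), Real.sinh t ^ 2 * Real.exp (-(x * Real.cosh t)) := by
  set f : ℝ → ℝ := fun t => Real.sinh t * Real.exp (-(x * Real.cosh t)) with hf
  set f' : ℝ → ℝ := fun t =>
    Real.cosh t * Real.exp (-(x * Real.cosh t)) - x * (Real.sinh t ^ 2 * Real.exp (-(x * Real.cosh t))) with hf'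
  have hderiv : ∀ t : ℝ, HasDerivAt f (f' t) t := by
    intro t
    have h := (Real.hasDerivAt_sinh t).mul (((Real.hasDerivAt_cosh t).const_mul x).neg.exp)
    refine h.congr_deriv ?_
    simp only [hf', Pi.neg_apply]
    ring
  have hint : IntegrableOn f' (Set.Ioi (0:ℝ)) := by
    have h1 := integrable_cosh_pow 1 hx
    simp only [pow_one] at h1
    exact h1.sub ((integrable_sinh_sq hx).const_mul x)
  have htend : Filter.Tendsto f Filter.atTop (𝓝 0) := by
    apply squeeze_zero_norm' (a := fun t =>
      ((Nat.factorial 1 / (x/2) ^ 1) * Real.exp (-(x/4))) * Real.exp (-(x/4) * t))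
    · filter_upwards [Filter.eventually_ge_atTop (0:ℝ)] with t ht
      have h1 : ‖f t‖ ≤ Real.cosh t * Real.exp (-(x * Real.cosh t)) := by
        simp only [hf, Real.norm_eq_abs, abs_mul, abs_of_nonneg (Real.exp_pos _).le]
        have habs : |Real.sinh t| ≤ Real.cosh t := by
          rw [Real.abs_sinh, ← Real.cosh_abs]; exact (Real.sinh_lt_cosh _).le
        exact mul_le_mul_of_nonneg_right habs (Real.exp_pos _).le
      refine h1.trans ?_
      have := cosh_exp_bound hx 1 ht
      simpa [mul_assoc] using this
    · have h0 : Filter.Tendsto (fun t : ℝ => Real.exp (-(x/4) * t)) Filter.atTop (𝓝 0) := by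
        have hmul : Filter.Tendsto (fun t : ℝ => x/4 * t) Filter.atTop Filter.atTop :=
          Filter.Tendsto.const_mul_atTop (show (0:ℝ) < x/4 by linarith) Filter.tendsto_id
        refine (Real.tendsto_exp_neg_atTop_nhds_zero.comp hmul).congr fun t => ?_
        simp only [Function.comp_apply, neg_mul]
      have h2 := h0.const_mul ((Nat.factorial 1 / (x/2) ^ 1) * Real.exp (-(x/4)) : ℝ)
      simp only [mul_zero] at h2
      exact h2
  have key := integral_Ioi_of_hasDerivAt_of_tendsto
    (f := f) (f' := f') (a := 0) (m := 0)
    ((Continuous.continuousWithinAt (by fun_prop)))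
    (fun t _ => hderiv t) hint htend
  have hf0 : f 0 = 0 := by simp [hf]
  rw [hf0, sub_zero] at key
  have h1 := integrable_cosh_pow 1 hx
  simp only [pow_one] at h1
  have hsub := integral_sub h1 ((integrable_sinh_sq hx).const_mul x)
  rw [hf'] at key
  rw [key] at hsub
  rw [MeasureTheory.integral_const_mul] at hsub
  linarith [hsub]

lemma bessel {x : ℝ} (hx : 0 < x) : K2 x = K0 x - K1 x / x := by
  have hparts := parts_identity hx
  have hsq : ∀ t : ℝ, Real.cosh t ^ 2 * Real.exp (-(x * Real.cosh t))
      = Real.sinh t ^ 2 * Real.exp (-(x * Real.cosh t)) + Real.exp (-(x * Real.cosh t)) := by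
    intro t
    have h := Real.cosh_sq t
    rw [h]; ring
  have h0 := integrable_cosh_pow 0 hx
  simp only [pow_zero, one_mul] at h0
  have hK2 : K2 x = (∫ t in Set.Ioi (0:ℝ), Real.sinh t ^ 2 * Real.exp (-(x * Real.cosh t))) + K0 x := by
    unfold K2 K0
    rw [← integral_add (integrable_sinh_sq hx) h0]
    congr 1; funext t; rw [hsq]
  have hK1 : K1 x = -(x * ∫ t in Set.Ioi (0:ℝ), Real.sinh t ^ 2 * Real.exp (-(x * Real.cosh t))) := by
    unfold K1; rw [hparts]
  rw [hK2, hK1]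
  field_simp
  ring

end PartA

section PartB

open Topology Filter

lemma inner_e2 (x : R2) (i : Fin 2) : (innerSL ℝ x : R2 →L[ℝ] ℝ) (e2 i) = x i := by
  simp [e2, real_inner_comm, EuclideanSpace.inner_single_left, EuclideanSpace.inner_single_right]

lemma proj_e2 (i j : Fin 2) :
    (EuclideanSpace.proj j : R2 →L[ℝ] ℝ) (e2 i) = if i = j then 1 else 0 := by
  have : (EuclideanSpace.proj j : R2 →L[ℝ] ℝ) (e2 i) = (e2 i) j := rfl
  rw [this, e2, EuclideanSpace.single_apply]
  simp [eq_comm]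

lemma hasFDerivAt_coord (x : R2) (j : Fin 2) :
    HasFDerivAt (fun y : R2 => y j) (EuclideanSpace.proj j : R2 →L[ℝ] ℝ) x := by
  have h := ((EuclideanSpace.proj j : R2 →L[ℝ] ℝ)).hasFDerivAt (x := x)
  simpa using h

lemma hasFDerivAt_norm2 {x : R2} (hx : x ≠ 0) :
    HasFDerivAt (fun y : R2 => ‖y‖) ((‖x‖)⁻¹ • (innerSL ℝ x : R2 →L[ℝ] ℝ)) x := by
  have hpos : 0 < ‖x‖ := norm_pos_iff.mpr hx
  have h1 : HasFDerivAt (fun y : R2 => ‖y‖ ^ 2) ((2:ℕ) • (innerSL ℝ x : R2 →L[ℝ] ℝ)) x :=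
    (hasStrictFDerivAt_norm_sq x).hasFDerivAt
  have h2 := (Real.hasDerivAt_sqrt (show ‖x‖ ^ 2 ≠ 0 by positivity)).comp_hasFDerivAt x h1
  simp only [Function.comp_def] at h2
  have heq : (fun y : R2 => Real.sqrt (‖y‖ ^ 2)) = fun y : R2 => ‖y‖ := by
    funext y; rw [Real.sqrt_sq (norm_nonneg y)]
  rw [heq] at h2
  refine h2.congr_fderiv ?_
  rw [Real.sqrt_sq (norm_nonneg x)]
  ext v
  simp only [ContinuousLinearMap.coe_smul', Pi.smul_apply, smul_eq_mul, nsmul_eq_mul]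
  push_cast
  field_simp
  ring
  simp [mul_comm]

lemma hasFDerivAt_radial {f : ℝ → ℝ} {f' : ℝ} {x : R2} (hx : x ≠ 0)
    (hf : HasDerivAt f f' (‖x‖ / 2)) :
    HasFDerivAt (fun y : R2 => f (‖y‖ / 2))
      ((f' / (2 * ‖x‖)) • (innerSL ℝ x : R2 →L[ℝ] ℝ)) x := by
  have hpos : 0 < ‖x‖ := norm_pos_iff.mpr hx
  have h1 := (hasFDerivAt_norm2 hx).const_mul ((2:ℝ)⁻¹)
  have hf' : HasDerivAt f f' ((2:ℝ)⁻¹ * ‖x‖) := by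
    rwa [show (2:ℝ)⁻¹ * ‖x‖ = ‖x‖ / 2 by ring]
  have h2 := hf'.comp_hasFDerivAt x h1
  simp only [Function.comp_def] at h2
  have heq : (fun y : R2 => f ((2:ℝ)⁻¹ * ‖y‖)) = fun y : R2 => f (‖y‖ / 2) := by
    funext y; rw [show (2:ℝ)⁻¹ * ‖y‖ = ‖y‖ / 2 by ring]
  rw [heq] at h2
  refine h2.congr_fderiv ?_
  ext v
  simp only [ContinuousLinearMap.coe_smul', Pi.smul_apply, smul_eq_mul]
  field_simp

lemma hasFDerivAt_E (x : R2) :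
    HasFDerivAt (fun y : R2 => Real.exp (-(y 0) / 2))
      ((-Real.exp (-(x 0) / 2) / 2) • (EuclideanSpace.proj 0 : R2 →L[ℝ] ℝ)) x := by
  have h1 := ((hasFDerivAt_coord x 0).const_mul ((-1:ℝ)/2))
  have h2 := (Real.hasDerivAt_exp ((-1:ℝ)/2 * x 0)).comp_hasFDerivAt x h1
  simp only [Function.comp_def] at h2
  have heq : (fun y : R2 => Real.exp ((-1:ℝ)/2 * y 0)) = fun y : R2 => Real.exp (-(y 0) / 2) := by
    funext y; congr 1; ring
  rw [heq] at h2
  refine h2.congr_fderiv ?_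
  ext v
  simp only [ContinuousLinearMap.coe_smul', Pi.smul_apply, smul_eq_mul]
  ring_nf

lemma hasFDerivAt_invnorm {x : R2} (hx : x ≠ 0) :
    HasFDerivAt (fun y : R2 => (2 * ‖y‖)⁻¹)
      ((-(2 * ‖x‖ ^ 3)⁻¹) • (innerSL ℝ x : R2 →L[ℝ] ℝ)) x := by
  have hpos : 0 < ‖x‖ := norm_pos_iff.mpr hx
  have h1 := (hasFDerivAt_norm2 hx).const_mul (2:ℝ)
  have h2 := (hasDerivAt_inv (show 2 * ‖x‖ ≠ 0 by positivity)).comp_hasFDerivAt x h1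
  simp only [Function.comp_def] at h2
  refine h2.congr_fderiv ?_
  ext v
  simp only [ContinuousLinearMap.coe_smul', Pi.smul_apply, smul_eq_mul]
  field_simp

lemma pd_phi {y : R2} (hy : y ≠ 0) (j : Fin 2) :
    pd j (fun z => Real.exp (-(z 0) / 2) * K0 (‖z‖ / 2)) y
      = Real.exp (-(y 0) / 2) * ((if j = 0 then (-1:ℝ)/2 else 0) * K0 (‖y‖ / 2)
          + K1 (‖y‖ / 2) * (y j) * (2 * ‖y‖)⁻¹) := by
  have hpos : 0 < ‖y‖ := norm_pos_iff.mpr hy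
  have hs : 0 < ‖y‖ / 2 := by linarith
  have hphi := (hasFDerivAt_E y).mul (hasFDerivAt_radial hy (K0_hasDeriv hs))
  unfold pd
  rw [show (fun z : R2 => Real.exp (-(z 0) / 2) * K0 (‖z‖ / 2)) = ((fun y : R2 => Real.exp (-(y 0) / 2)) * fun y => K0 (‖y‖ / 2)) from rfl, hphi.fderiv]
  simp only [ContinuousLinearMap.add_apply, ContinuousLinearMap.coe_smul', Pi.smul_apply,
    smul_eq_mul, inner_e2, proj_e2]
  fin_cases j <;> norm_num <;> field_simp <;> (try ring) <;> (try tauto)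

/-- the first-derivative formula as a function -/
noncomputable def Pf (j : Fin 2) : R2 → ℝ := fun y =>
  Real.exp (-(y 0) / 2) * ((if j = 0 then (-1:ℝ)/2 else 0) * K0 (‖y‖ / 2)
    + K1 (‖y‖ / 2) * (y j) * (2 * ‖y‖)⁻¹)

lemma pd2_phi {x : R2} (hx : x ≠ 0) (i j : Fin 2) :
    pd2 i j (fun y => Real.exp (-(y 0) / 2) * K0 (‖y‖ / 2)) x
      = Real.exp (-(x 0) / 2) * (
          (if i = 0 then (1:ℝ) else 0) * (if j = 0 then (1:ℝ) else 0) * K0 (‖x‖/2) / 4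
          - (if i = 0 then (1:ℝ) else 0) * K1 (‖x‖/2) * (x j) / (4 * ‖x‖)
          - (if j = 0 then (1:ℝ) else 0) * K1 (‖x‖/2) * (x i) / (4 * ‖x‖)
          + K2 (‖x‖/2) * (x i) * (x j) / (4 * ‖x‖^2)
          + (if i = j then (1:ℝ) else 0) * K1 (‖x‖/2) / (2 * ‖x‖)
          - K1 (‖x‖/2) * (x i) * (x j) / (2 * ‖x‖^3)) := by
  have hpos : 0 < ‖x‖ := norm_pos_iff.mpr hx
  have hs : 0 < ‖x‖ / 2 := by linarith
  have hEv : (fun y : R2 => (fderiv ℝ (fun z : R2 => Real.exp (-(z 0) / 2) * K0 (‖z‖ / 2)) y) (e2 j)) =ᶠ[𝓝 x] Pf j := by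
    filter_upwards [IsOpen.mem_nhds isOpen_ne hx] with y hy
    exact pd_phi hy j
  have hP : HasFDerivAt (Pf j) _ x :=
    (hasFDerivAt_E x).mul
      (((hasFDerivAt_radial hx (K0_hasDeriv hs)).const_mul (if j = 0 then (-1:ℝ)/2 else 0)).add
        (((hasFDerivAt_radial hx (K1_hasDeriv hs)).mul (hasFDerivAt_coord x j)).mul
          (hasFDerivAt_invnorm hx)))
  unfold pd2 pd
  rw [Filter.EventuallyEq.fderiv_eq hEv, hP.fderiv]
  simp only [ContinuousLinearMap.add_apply, ContinuousLinearMap.coe_smul', Pi.smul_apply,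
    smul_eq_mul, inner_e2, proj_e2, ContinuousLinearMap.coe_add', Pi.add_apply, neg_mul,
    ContinuousLinearMap.coe_sub', Pi.sub_apply]
  fin_cases i <;> fin_cases j <;> norm_num <;> field_simp <;> (try ring) <;> (try tauto)

lemma norm_sq_R2 (x : R2) : ‖x‖ ^ 2 = x 0 ^ 2 + x 1 ^ 2 := by
  rw [EuclideanSpace.norm_eq, Real.sq_sqrt (by positivity)]
  simp [Fin.sum_univ_two, sq_abs]

end PartB



/-- φ₀(x) = e^{−x₁/2} K₀(|x|/2) satisfies Δφ₀ + ∂₁φ₀ = 0 on ℝ² \ {0}. -/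
theorem stmt13 :
    ∀ x : R2, x ≠ 0 →
      (∑ k, pd2 k k (fun y => Real.exp (-(y 0) / 2) * K0 (‖y‖ / 2)) x)
        + pd 0 (fun y => Real.exp (-(y 0) / 2) * K0 (‖y‖ / 2)) x = 0 := by
  intro x hx
  have hpos : 0 < ‖x‖ := norm_pos_iff.mpr hx
  have hs : 0 < ‖x‖ / 2 := by linarith
  have hB := bessel hs
  have hsq := norm_sq_R2 x
  have hb2 : x 1 ^ 2 = ‖x‖ ^ 2 - x 0 ^ 2 := by linarith
  rw [Fin.sum_univ_two]
  rw [pd2_phi hx 0 0, pd2_phi hx 1 1, pd_phi hx 0, hB]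
  norm_num
  field_simp
  linear_combination (norm := ring_nf) (Real.exp (-(x 0 / 2)) * (2 * ‖x‖ * K0 (‖x‖ / 2)
    - 8 * K1 (‖x‖ / 2))) * hb2
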